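/- For every integer t ≥ 0 there exist a finite simple graph G and an edge e of G such that ppt(G_e) ≤ ppt(G) − t, where G_e is the graph obtained from G by subdividing the edge e. -/

import Mathlib

namespace PowerProp

open SimpleGraph

variable {V : Type*} {α β : Type*}

/-- The closed neighborhood `N[S]` of a set of vertices. -/
def closedNbhd (G : SimpleGraph V) (S : Set V) : Set V :=
  S ∪ ⋃ v ∈ S, G.neighborSet v

/-- One propagation step of the `k`-power domination process. -/
def propStep (k : ℕ) (G : SimpleGraph V) (S : Set V) : Set V :=
  S ∪ {w | ∃ v ∈ S, w ∈ G.neighborSet v \ S ∧ (G.neighborSet v \ S).ncard ≤ k}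

/-- `S^[t]`: the set observed after `t` steps (step 1 is the domination step). -/
def powerIter (k : ℕ) (G : SimpleGraph V) (S : Set V) : ℕ → Set V
  | 0 => S
  | 1 => closedNbhd G S
  | (t + 2) => propStep k G (powerIter k G S (t + 1))

/-- `S` is a `k`-power dominating set of `G`. -/
def IsPDS (k : ℕ) (G : SimpleGraph V) (S : Set V) : Prop :=
  ∃ l, powerIter k G S l = Set.univ

/-- The `k`-power domination number `γ_{P,k}(G)`. -/
noncomputable def pdNum (k : ℕ) (G : SimpleGraph V) : ℕ :=
  sInf {n | ∃ S : Set V, S.ncard = n ∧ IsPDS k G S}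

/-- `S` is a minimum `k`-power dominating set of `G`. -/
def IsMinPDS (k : ℕ) (G : SimpleGraph V) (S : Set V) : Prop :=
  IsPDS k G S ∧ S.ncard = pdNum k G

/-- `ppt_k(G,S)`, the `k`-power propagation time of `G` with `S`. -/
noncomputable def pptOf (k : ℕ) (G : SimpleGraph V) (S : Set V) : ℕ :=
  sInf {l | powerIter k G S l = Set.univ}

/-- `ppt_k(G)`, the (minimum) `k`-power propagation time of `G`. -/
noncomputable def ppt (k : ℕ) (G : SimpleGraph V) : ℕ :=
  sInf {t | ∃ S : Set V, IsMinPDS k G S ∧ pptOf k G S = t}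

end PowerProp

open SimpleGraph

namespace PowerProp

variable {W : Type*}

/-- The graph obtained from `G` by subdividing the edge `uv`: the edge `uv` is
replaced by a path `u - w - v` through the new vertex `w = Sum.inr ()`. -/
def subdivide (G : SimpleGraph W) (u v : W) : SimpleGraph (W ⊕ Unit) :=
  SimpleGraph.fromRel (fun a b =>
    (∃ x y : W, a = Sum.inl x ∧ b = Sum.inl y ∧ G.Adj x y ∧
      ¬((x = u ∧ y = v) ∨ (x = v ∧ y = u))) ∨
    (a = Sum.inl u ∧ b = Sum.inr ()) ∨ (a = Sum.inl v ∧ b = Sum.inr ()))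

end PowerProp

open SimpleGraph

namespace PowerProp

variable {V : Type*}

/-! ### Generic lemmas about the power domination process -/

lemma subset_closedNbhd (G : SimpleGraph V) (S : Set V) : S ⊆ closedNbhd G S :=
  Set.subset_union_left

lemma subset_propStep (k : ℕ) (G : SimpleGraph V) (S : Set V) : S ⊆ propStep k G S :=
  Set.subset_union_left

lemma powerIter_succ_two (k : ℕ) (G : SimpleGraph V) (S : Set V) (l : ℕ) :
    powerIter k G S (l + 2) = propStep k G (powerIter k G S (l + 1)) := rfl

lemma mem_closedNbhd_of_adj {G : SimpleGraph V} {S : Set V} {s x : V}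
    (hs : s ∈ S) (h : G.Adj s x) : x ∈ closedNbhd G S := by
  right
  exact Set.mem_biUnion hs h

lemma powerIter_empty (k : ℕ) (G : SimpleGraph V) : ∀ l, powerIter k G ∅ l = ∅
  | 0 => rfl
  | 1 => by simp [powerIter, closedNbhd]
  | (l + 2) => by
      rw [powerIter_succ_two, powerIter_empty k G (l + 1)]
      simp [propStep]

/-- If `A` contains the closed neighborhood of `S` and every vertex of `A` with a
neighbor outside `A` has at least two neighbors outside `A`, then the `1`-power
domination process started at `S` never leaves `A`. -/
lemma stall [Finite V] (G : SimpleGraph V) (S A : Set V)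
    (h1 : closedNbhd G S ⊆ A)
    (h2 : ∀ a ∈ A, ∀ b, G.Adj a b → b ∉ A → 2 ≤ ((G.neighborSet a) \ A).ncard) :
    ∀ l, powerIter 1 G S l ⊆ A
  | 0 => (subset_closedNbhd G S).trans h1
  | 1 => h1
  | (l + 2) => by
      have ih := stall G S A h1 h2 (l + 1)
      rw [powerIter_succ_two]
      intro w hw
      rcases hw with hw | ⟨v, hv, ⟨hadj, _⟩, hcard⟩
      · exact ih hw
      · by_contra hwA
        have hadj' : G.Adj v w := hadj
        have hsub : (G.neighborSet v) \ A ⊆ (G.neighborSet v) \ (powerIter 1 G S (l + 1)) :=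
          Set.diff_subset_diff_right ih
        have h2' := h2 v (ih hv) w hadj' hwA
        have := (Set.ncard_le_ncard hsub (Set.toFinite _)).trans hcard
        omega

/-- A `1`-Lipschitz potential function bounds the speed of propagation. -/
lemma lipschitz (G : SimpleGraph V) (S : Set V) (f : V → ℕ) (c : ℕ)
    (hf : ∀ a b, G.Adj a b → f b ≤ f a + 1)
    (hS : ∀ s ∈ S, f s ≤ c) :
    ∀ l, ∀ x ∈ powerIter 1 G S l, f x ≤ c + l
  | 0 => fun x hx => (hS x hx).trans (Nat.le_add_right c 0)
  | 1 => by
      intro x hx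
      rcases hx with hx | hx
      · exact (hS x hx).trans (by omega)
      · simp only [Set.mem_iUnion, SimpleGraph.mem_neighborSet] at hx
        obtain ⟨s, hs, hadj⟩ := hx
        have := hf s x hadj
        have := hS s hs
        omega
  | (l + 2) => by
      have ih := lipschitz G S f c hf hS (l + 1)
      rw [powerIter_succ_two]
      intro x hx
      rcases hx with hx | ⟨v, hv, ⟨hadj, _⟩, _⟩
      · have := ih x hx; omega
      · have := ih v hv
        have := hf v x hadj
        omega

/-! ### The construction -/

/-- The edge pattern of the graph `GG t`:
vertex `2` has pendant leaves `0`, `1`; `2,3,4` form a triangle; `3` and `4` are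
both adjacent to `5`, which starts the path `5, 6, ..., 2t+5`. -/
def sp (i j : ℕ) : Prop :=
  (i = 2 ∧ j ≤ 1) ∨ (i = 2 ∧ (j = 3 ∨ j = 4)) ∨ (i = 3 ∧ j = 4) ∨
  ((i = 3 ∨ i = 4) ∧ j = 5) ∨ (5 ≤ i ∧ j = i + 1)

def GG (t : ℕ) : SimpleGraph (Fin (2*t+6)) :=
  SimpleGraph.fromRel (fun a b => sp a.val b.val)

lemma GG_adj {t : ℕ} {a b : Fin (2*t+6)} :
    (GG t).Adj a b ↔ a.val ≠ b.val ∧ (sp a.val b.val ∨ sp b.val a.val) := by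
  simp [GG, SimpleGraph.fromRel_adj, Ne, Fin.ext_iff]

def uu (t : ℕ) : Fin (2*t+6) := ⟨3, by omega⟩
def vv (t : ℕ) : Fin (2*t+6) := ⟨4, by omega⟩
def zz (t : ℕ) : Fin (2*t+6) := ⟨2, by omega⟩
def xm (t : ℕ) : Fin (2*t+6) := ⟨t+5, by omega⟩
def xL (t : ℕ) : Fin (2*t+6) := ⟨2*t+5, by omega⟩

@[simp] lemma uu_val (t : ℕ) : (uu t).val = 3 := rfl
@[simp] lemma vv_val (t : ℕ) : (vv t).val = 4 := rfl
@[simp] lemma zz_val (t : ℕ) : (zz t).val = 2 := rfl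
@[simp] lemma xm_val (t : ℕ) : (xm t).val = t+5 := rfl
@[simp] lemma xL_val (t : ℕ) : (xL t).val = 2*t+5 := rfl

@[simp] lemma fin_mk_val {n m : ℕ} (h : m < n) : (⟨m, h⟩ : Fin n).val = m := rfl

def HH (t : ℕ) : SimpleGraph (Fin (2*t+6) ⊕ Unit) := subdivide (GG t) (uu t) (vv t)

lemma HH_adj_ll {t : ℕ} {a b : Fin (2*t+6)} :
    (HH t).Adj (Sum.inl a) (Sum.inl b) ↔
      a.val ≠ b.val ∧ (sp a.val b.val ∨ sp b.val a.val) ∧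
        ¬(a.val = 3 ∧ b.val = 4) ∧ ¬(a.val = 4 ∧ b.val = 3) := by
  have huv : (uu t).val = 3 ∧ (vv t).val = 4 := ⟨rfl, rfl⟩
  constructor
  · intro h
    unfold HH subdivide at h
    rw [SimpleGraph.fromRel_adj] at h
    obtain ⟨hne, hq | hq⟩ := h
    · rcases hq with ⟨x, y, hx, hy, hadj, hne2⟩ | ⟨_, h⟩ | ⟨_, h⟩
      · rw [Sum.inl.injEq] at hx hy
        subst hx; subst hy
        rw [GG_adj] at hadj
        refine ⟨hadj.1, hadj.2, ?_, ?_⟩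
        · intro ⟨h3, h4⟩
          exact hne2 (Or.inl ⟨Fin.ext (by simp; omega), Fin.ext (by simp; omega)⟩)
        · intro ⟨h4, h3⟩
          exact hne2 (Or.inr ⟨Fin.ext (by simp; omega), Fin.ext (by simp; omega)⟩)
      · exact absurd h (by simp)
      · exact absurd h (by simp)
    · rcases hq with ⟨x, y, hx, hy, hadj, hne2⟩ | ⟨_, h⟩ | ⟨_, h⟩
      · rw [Sum.inl.injEq] at hx hy
        subst hx; subst hy
        rw [GG_adj] at hadj
        refine ⟨fun h => hadj.1 h.symm, (by tauto), ?_, ?_⟩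
        · intro ⟨h3, h4⟩
          exact hne2 (Or.inr ⟨Fin.ext (by simp; omega), Fin.ext (by simp; omega)⟩)
        · intro ⟨h4, h3⟩
          exact hne2 (Or.inl ⟨Fin.ext (by simp; omega), Fin.ext (by simp; omega)⟩)
      · exact absurd h (by simp)
      · exact absurd h (by simp)
  · rintro ⟨hne, hsp, h34, h43⟩
    unfold HH subdivide
    rw [SimpleGraph.fromRel_adj]
    refine ⟨by simp [Fin.ext_iff, hne], Or.inl (Or.inl ⟨a, b, rfl, rfl, GG_adj.mpr ⟨hne, hsp⟩, ?_⟩)⟩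
    rintro (⟨h1, h2⟩ | ⟨h1, h2⟩)
    · rw [Fin.ext_iff] at h1 h2
      exact h34 ⟨by omega, by omega⟩
    · rw [Fin.ext_iff] at h1 h2
      exact h43 ⟨by omega, by omega⟩

lemma HH_adj_lr {t : ℕ} {a : Fin (2*t+6)} {u : Unit} :
    (HH t).Adj (Sum.inl a) (Sum.inr u) ↔ (a.val = 3 ∨ a.val = 4) := by
  have hu : u = () := rfl
  subst hu
  constructor
  · intro h
    unfold HH subdivide at h
    rw [SimpleGraph.fromRel_adj] at h
    obtain ⟨hne, hq | hq⟩ := h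
    · rcases hq with ⟨x, y, hx, hy, _, _⟩ | ⟨h, _⟩ | ⟨h, _⟩
      · exact absurd hy (by simp)
      · rw [Sum.inl.injEq] at h; subst h; left; rfl
      · rw [Sum.inl.injEq] at h; subst h; right; rfl
    · rcases hq with ⟨x, y, hx, hy, _, _⟩ | ⟨h, _⟩ | ⟨h, _⟩
      · exact absurd hx (by simp)
      · exact absurd h (by simp)
      · exact absurd h (by simp)
  · intro h
    unfold HH subdivide
    rw [SimpleGraph.fromRel_adj]
    refine ⟨by simp, Or.inl ?_⟩
    rcases h with h | h
    · have : a = uu t := Fin.ext (by simp; omega)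
      subst this
      exact Or.inr (Or.inl ⟨rfl, rfl⟩)
    · have : a = vv t := Fin.ext (by simp; omega)
      subst this
      exact Or.inr (Or.inr ⟨rfl, rfl⟩)

lemma HH_adj_rl {t : ℕ} {a : Fin (2*t+6)} {u : Unit} :
    (HH t).Adj (Sum.inr u) (Sum.inl a) ↔ (a.val = 3 ∨ a.val = 4) := by
  rw [adj_comm]; exact HH_adj_lr

lemma HH_adj_rr {t : ℕ} {u u' : Unit} : ¬ (HH t).Adj (Sum.inr u) (Sum.inr u') := by
  have : u = u' := rfl
  subst this
  exact (HH t).irrefl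

/-! ### Analysis of `GG t` -/

lemma powerIter_one (k : ℕ) (G : SimpleGraph V) (S : Set V) :
    powerIter k G S 1 = closedNbhd G S := rfl

lemma sim_GG (t : ℕ) :
    ∀ j, 1 ≤ j → ∀ a : Fin (2*t+6), a.val ≤ j + 3 → a ∈ powerIter 1 (GG t) {zz t} j := by
  intro j hj
  induction j, hj using Nat.le_induction with
  | base =>
    intro a ha
    rw [powerIter_one]
    by_cases h2 : a = zz t
    · exact subset_closedNbhd _ _ (by simp [h2])
    · refine mem_closedNbhd_of_adj (Set.mem_singleton _) ?_
      have hne : a.val ≠ 2 := fun h => h2 (Fin.ext (by simp [h]))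
      rw [GG_adj]
      simp only [zz_val]
      try simp only [fin_mk_val] at *
      unfold sp
      omega
  | succ j hj ih =>
    intro a ha
    obtain ⟨m, rfl⟩ : ∃ m, j = m + 1 := ⟨j - 1, by omega⟩
    rw [powerIter_succ_two]
    by_cases hin : a ∈ powerIter 1 (GG t) {zz t} (m + 1)
    · exact subset_propStep _ _ _ hin
    · have hnotB : ¬ (a.val ≤ m + 4) := fun h => hin (ih a h)
      have haval : a.val = m + 5 := by omega
      refine Set.mem_union_right _ ?_
      by_cases h5 : a.val = 5
      · refine ⟨uu t, ih (uu t) (by simp), ⟨?_, hin⟩, ?_⟩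
        · show a ∈ (GG t).neighborSet (uu t)
          rw [SimpleGraph.mem_neighborSet, GG_adj]
          simp only [uu_val]
          try simp only [fin_mk_val] at *
          unfold sp
          omega
        · refine le_trans (Set.ncard_le_ncard ?_ (Set.finite_singleton a)) (by simp)
          rintro c ⟨hadj, hcX⟩
          have hcB : ¬ (c.val ≤ m + 4) := fun h => hcX (ih c h)
          rw [SimpleGraph.mem_neighborSet, GG_adj] at hadj
          simp only [uu_val] at hadj
          try simp only [fin_mk_val] at *
          unfold sp at hadj
          have : c.val = a.val := by omega
          simp [Set.mem_singleton_iff, Fin.ext_iff, this]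
      · have h6 : 6 ≤ a.val := by omega
        have hlt : m + 4 < 2*t+6 := by have := a.isLt; omega
        refine ⟨⟨m + 4, hlt⟩, ih _ (by simp), ⟨?_, hin⟩, ?_⟩
        · show a ∈ (GG t).neighborSet _
          rw [SimpleGraph.mem_neighborSet, GG_adj]
          try simp only [fin_mk_val] at *
          unfold sp
          omega
        · refine le_trans (Set.ncard_le_ncard ?_ (Set.finite_singleton a)) (by simp)
          rintro c ⟨hadj, hcX⟩
          have hcB : ¬ (c.val ≤ m + 4) := fun h => hcX (ih c h)
          rw [SimpleGraph.mem_neighborSet, GG_adj] at hadj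
          try simp only [fin_mk_val] at *
          unfold sp at hadj
          have : c.val = a.val := by omega
          simp [Set.mem_singleton_iff, Fin.ext_iff, this]

lemma GG_univ (t : ℕ) : powerIter 1 (GG t) {zz t} (2*t+2) = Set.univ := by
  refine Set.eq_univ_iff_forall.mpr fun a => ?_
  exact sim_GG t (2*t+2) (by omega) a (by have := a.isLt; omega)

lemma isPDS_GG (t : ℕ) : IsPDS 1 (GG t) {zz t} := ⟨2*t+2, GG_univ t⟩

lemma pin_GG {t : ℕ} {S : Set (Fin (2*t+6))} (h : IsPDS 1 (GG t) S) :
    ∃ a ∈ S, a.val ≤ 2 := by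
  by_contra hc
  push_neg at hc
  have hstall : ∀ l, powerIter 1 (GG t) S l ⊆ {a : Fin (2*t+6) | 2 ≤ a.val} := by
    refine stall (GG t) S _ ?_ ?_
    · intro x hx
      rcases hx with hx | hx
      · have := hc x hx
        simp only [Set.mem_setOf_eq]
        omega
      · simp only [Set.mem_iUnion, SimpleGraph.mem_neighborSet] at hx
        obtain ⟨s, hs, hadj⟩ := hx
        have hs3 := hc s hs
        rw [GG_adj] at hadj
        try simp only [fin_mk_val] at *
        unfold sp at hadj
        simp only [Set.mem_setOf_eq]
        omega
    · intro a ha b hadj hb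
      simp only [Set.mem_setOf_eq, not_le] at ha hb
      rw [GG_adj] at hadj
      have ha2 : a.val = 2 := by unfold sp at hadj; omega
      have h0 : (⟨0, by omega⟩ : Fin (2*t+6)) ∈
          (GG t).neighborSet a \ {a : Fin (2*t+6) | 2 ≤ a.val} := by
        refine ⟨?_, by simp⟩
        rw [SimpleGraph.mem_neighborSet, GG_adj]
        try simp only [fin_mk_val] at *
        unfold sp
        omega
      have h1 : (⟨1, by omega⟩ : Fin (2*t+6)) ∈
          (GG t).neighborSet a \ {a : Fin (2*t+6) | 2 ≤ a.val} := by
        refine ⟨?_, by simp⟩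
        rw [SimpleGraph.mem_neighborSet, GG_adj]
        try simp only [fin_mk_val] at *
        unfold sp
        omega
      show 1 < _
      rw [Set.one_lt_ncard_iff (Set.toFinite _)]
      exact ⟨_, _, h0, h1, by simp [Fin.ext_iff]⟩
  obtain ⟨l, hl⟩ := h
  have : (⟨0, by omega⟩ : Fin (2*t+6)) ∈ {a : Fin (2*t+6) | 2 ≤ a.val} :=
    hstall l (by rw [hl]; trivial)
  simp at this

lemma pdNum_GG (t : ℕ) : pdNum 1 (GG t) = 1 := by
  refine le_antisymm (Nat.sInf_le ⟨{zz t}, Set.ncard_singleton _, isPDS_GG t⟩) ?_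
  refine le_csInf ⟨1, {zz t}, Set.ncard_singleton _, isPDS_GG t⟩ ?_
  rintro m ⟨S, hcard, hpds⟩
  by_contra hm
  have hm0 : m = 0 := by omega
  subst hm0
  have hS : S = ∅ := (Set.ncard_eq_zero (Set.toFinite S)).mp hcard
  subst hS
  obtain ⟨l, hl⟩ := hpds
  rw [powerIter_empty] at hl
  exact absurd (hl.symm ▸ Set.mem_univ (⟨0, by omega⟩ : Fin (2*t+6))) (Set.notMem_empty _)

def fpot (t : ℕ) : Fin (2*t+6) → ℕ := fun a =>
  if a.val ≤ 1 then 0 else if a.val = 2 then 1 else if a.val ≤ 4 then 2 else a.val - 2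

lemma fpot_lip (t : ℕ) : ∀ a b, (GG t).Adj a b → fpot t b ≤ fpot t a + 1 := by
  intro a b hadj
  rw [GG_adj] at hadj
  try simp only [fin_mk_val] at *
  unfold sp at hadj
  unfold fpot
  split_ifs <;> omega

lemma ppt_GG (t : ℕ) : 2*t+2 ≤ ppt 1 (GG t) := by
  have hne : {l | ∃ S, IsMinPDS 1 (GG t) S ∧ pptOf 1 (GG t) S = l}.Nonempty :=
    ⟨_, {zz t}, ⟨isPDS_GG t, by rw [pdNum_GG]; exact Set.ncard_singleton _⟩, rfl⟩
  have hmem := Nat.sInf_mem hne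
  obtain ⟨S, ⟨hpds, hcard⟩, hval⟩ := hmem
  rw [pdNum_GG] at hcard
  obtain ⟨a, rfl⟩ := Set.ncard_eq_one.mp hcard
  obtain ⟨b, hb, hb2⟩ := pin_GG hpds
  rw [Set.mem_singleton_iff] at hb
  subst hb
  have hset : {l | powerIter 1 (GG t) {b} l = Set.univ}.Nonempty := hpds
  have hmem2 := Nat.sInf_mem hset
  rw [Set.mem_setOf_eq] at hmem2
  have hxl : xL t ∈ powerIter 1 (GG t) {b}
      (sInf {l | powerIter 1 (GG t) {b} l = Set.univ}) := by
    rw [hmem2]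
    trivial
  have hlip := lipschitz (GG t) {b} (fpot t) 1 (fpot_lip t)
    (fun s hs => by
      rw [Set.mem_singleton_iff] at hs
      subst hs
      unfold fpot
      split_ifs <;> omega) _ _ hxl
  have hfl : fpot t (xL t) = 2*t+3 := by
    unfold fpot
    simp only [xL_val]
    show (if 2*t+5 ≤ 1 then 0 else if 2*t+5 = 2 then 1 else if 2*t+5 ≤ 4 then 2 else 2*t+5-2) = 2*t+3
    split_ifs <;> omega
  rw [hfl] at hlip
  have hppt : ppt 1 (GG t) = pptOf 1 (GG t) {b} := hval.symm
  rw [hppt]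
  unfold pptOf
  omega

/-! ### Analysis of `HH t` -/

def SS (t : ℕ) : Set (Fin (2*t+6) ⊕ Unit) := {Sum.inl (zz t), Sum.inl (xm t)}

def CC (t j : ℕ) : Set (Fin (2*t+6) ⊕ Unit) :=
  Sum.elim (fun a : Fin (2*t+6) => a.val ≤ 4 ∨ (t+5 ≤ a.val + j ∧ a.val ≤ t+5+j))
    (fun _ => t+2 ≤ j)

lemma HH_nbr_path {t : ℕ} {pv : ℕ} (h6 : 6 ≤ pv) (hlt : pv < 2*t+6)
    {c : Fin (2*t+6) ⊕ Unit} (hadj : (HH t).Adj (Sum.inl ⟨pv, hlt⟩) c) :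
    ∃ b : Fin (2*t+6), c = Sum.inl b ∧ (b.val + 1 = pv ∨ b.val = pv + 1) := by
  match c with
  | Sum.inr u =>
      rw [HH_adj_lr] at hadj
      simp only [] at hadj
      omega
  | Sum.inl b =>
      rw [HH_adj_ll] at hadj
      refine ⟨b, rfl, ?_⟩
      try simp only [fin_mk_val] at *
      unfold sp at hadj
      omega

set_option maxHeartbeats 1000000 in
lemma sim_HH (t : ℕ) : ∀ j, 1 ≤ j → CC t j ⊆ powerIter 1 (HH t) (SS t) j := by
  intro j hj
  induction j, hj using Nat.le_induction with
  | base =>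
    intro p hp
    rw [powerIter_one]
    match p with
    | Sum.inr u =>
        have : t + 2 ≤ 1 := hp
        omega
    | Sum.inl a =>
        have hp' : a.val ≤ 4 ∨ (t+5 ≤ a.val + 1 ∧ a.val ≤ t+5+1) := hp
        by_cases hz : a = zz t
        · exact subset_closedNbhd _ _ (by simp [SS, hz])
        by_cases hxm : a = xm t
        · exact subset_closedNbhd _ _ (by simp [SS, hxm])
        have hz' : a.val ≠ 2 := fun h => hz (Fin.ext (by simp [h]))
        have hxm' : a.val ≠ t+5 := fun h => hxm (Fin.ext (by simp [h]))
        by_cases h4 : a.val ≤ 4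
        · refine mem_closedNbhd_of_adj (s := Sum.inl (zz t)) (by simp [SS]) ?_
          rw [HH_adj_ll]
          simp only [zz_val]
          try simp only [fin_mk_val] at *
          unfold sp
          omega
        · refine mem_closedNbhd_of_adj (s := Sum.inl (xm t)) (by simp [SS]) ?_
          rw [HH_adj_ll]
          simp only [xm_val]
          try simp only [fin_mk_val] at *
          unfold sp
          omega
  | succ j hj ih =>
    intro p hp
    obtain ⟨m, rfl⟩ : ∃ m, j = m + 1 := ⟨j - 1, by omega⟩
    rw [powerIter_succ_two]
    by_cases hin : p ∈ powerIter 1 (HH t) (SS t) (m + 1)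
    · exact subset_propStep _ _ _ hin
    · refine Set.mem_union_right _ ?_
      match p with
      | Sum.inr u =>
          have hu : u = () := rfl
          subst hu
          have hp' : t + 2 ≤ m + 2 := hp
          have hnc : ¬ (t + 2 ≤ m + 1) := fun h => hin (ih h)
          refine ⟨Sum.inl (uu t), ih (Or.inl (by simp : (uu t).val ≤ 4)), ⟨?_, hin⟩, ?_⟩
          · show Sum.inr () ∈ (HH t).neighborSet (Sum.inl (uu t))
            rw [SimpleGraph.mem_neighborSet, HH_adj_lr]
            simp
          · refine le_trans (Set.ncard_le_ncard ?_
              (Set.finite_singleton (Sum.inr ()))) (by simp)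
            rintro c ⟨hadj, hcX⟩
            rw [SimpleGraph.mem_neighborSet] at hadj
            match c with
            | Sum.inr u' =>
                have : u' = () := rfl
                subst this
                simp
            | Sum.inl b =>
                exfalso
                rw [HH_adj_ll] at hadj
                simp only [uu_val] at hadj
                try simp only [fin_mk_val] at *
                unfold sp at hadj
                refine hcX (ih ?_)
                show b.val ≤ 4 ∨ (t+5 ≤ b.val + (m+1) ∧ b.val ≤ t+5+(m+1))
                omega
      | Sum.inl a =>
          have hp' : a.val ≤ 4 ∨ (t+5 ≤ a.val + (m+2) ∧ a.val ≤ t+5+(m+2)) := hp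
          have hnc : ¬ (a.val ≤ 4 ∨ (t+5 ≤ a.val + (m+1) ∧ a.val ≤ t+5+(m+1))) :=
            fun h => hin (ih h)
          have halt := a.isLt
          have hcase : (6 ≤ a.val + 1 ∧ a.val + (m+2) = t+5) ∨
              (6 ≤ a.val - 1 ∧ a.val = t+6+(m+1)) := by omega
          rcases hcase with ⟨h6, hval⟩ | ⟨h6, hval⟩
          · -- left front: parent is a+1
            have hplt : a.val + 1 < 2*t+6 := by omega
            refine ⟨Sum.inl ⟨a.val + 1, hplt⟩, ih ?_, ⟨?_, hin⟩, ?_⟩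
            · show (a.val + 1 ≤ 4) ∨ (t+5 ≤ (a.val+1) + (m+1) ∧ (a.val+1) ≤ t+5+(m+1))
              omega
            · show Sum.inl a ∈ (HH t).neighborSet (Sum.inl ⟨a.val + 1, hplt⟩)
              rw [SimpleGraph.mem_neighborSet, HH_adj_ll]
              try simp only [fin_mk_val] at *
              unfold sp
              omega
            · refine le_trans (Set.ncard_le_ncard ?_
                (Set.finite_singleton (Sum.inl a))) (by simp)
              rintro c ⟨hadj, hcX⟩
              rw [SimpleGraph.mem_neighborSet] at hadj
              obtain ⟨b, rfl, hb⟩ := HH_nbr_path h6 hplt hadj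
              have hbng : ¬ (b.val ≤ 4 ∨ (t+5 ≤ b.val + (m+1) ∧ b.val ≤ t+5+(m+1))) :=
                fun h => hcX (ih h)
              have : b.val = a.val := by omega
              simp [Set.mem_singleton_iff, Fin.ext_iff, this]
          · -- right front: parent is a-1
            have hplt : a.val - 1 < 2*t+6 := by omega
            refine ⟨Sum.inl ⟨a.val - 1, hplt⟩, ih ?_, ⟨?_, hin⟩, ?_⟩
            · show (a.val - 1 ≤ 4) ∨ (t+5 ≤ (a.val-1) + (m+1) ∧ (a.val-1) ≤ t+5+(m+1))
              omega
            · show Sum.inl a ∈ (HH t).neighborSet (Sum.inl ⟨a.val - 1, hplt⟩)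
              rw [SimpleGraph.mem_neighborSet, HH_adj_ll]
              try simp only [fin_mk_val] at *
              unfold sp
              omega
            · refine le_trans (Set.ncard_le_ncard ?_
                (Set.finite_singleton (Sum.inl a))) (by simp)
              rintro c ⟨hadj, hcX⟩
              rw [SimpleGraph.mem_neighborSet] at hadj
              obtain ⟨b, rfl, hb⟩ := HH_nbr_path h6 hplt hadj
              have hbng : ¬ (b.val ≤ 4 ∨ (t+5 ≤ b.val + (m+1) ∧ b.val ≤ t+5+(m+1))) :=
                fun h => hcX (ih h)
              have : b.val = a.val := by omega
              simp [Set.mem_singleton_iff, Fin.ext_iff, this]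

lemma HH_univ (t : ℕ) : powerIter 1 (HH t) (SS t) (t+2) = Set.univ := by
  refine Set.eq_univ_iff_forall.mpr fun p => ?_
  refine sim_HH t (t+2) (by omega) ?_
  match p with
  | Sum.inr u =>
      show t+2 ≤ t+2
      exact le_rfl
  | Sum.inl a =>
      show a.val ≤ 4 ∨ (t+5 ≤ a.val + (t+2) ∧ a.val ≤ t+5+(t+2))
      have := a.isLt
      omega

lemma isPDS_HH (t : ℕ) : IsPDS 1 (HH t) (SS t) := ⟨t+2, HH_univ t⟩

lemma pin_HH {t : ℕ} {S : Set (Fin (2*t+6) ⊕ Unit)} (h : IsPDS 1 (HH t) S) :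
    ∃ a : Fin (2*t+6), Sum.inl a ∈ S ∧ a.val ≤ 2 := by
  by_contra hc
  push_neg at hc
  set A : Set (Fin (2*t+6) ⊕ Unit) := {p | ∀ a : Fin (2*t+6), p = Sum.inl a → 2 ≤ a.val}
    with hA
  have hstall : ∀ l, powerIter 1 (HH t) S l ⊆ A := by
    refine stall (HH t) S _ ?_ ?_
    · intro x hx
      rcases hx with hx | hx
      · intro a hax
        subst hax
        have := hc a hx
        omega
      · simp only [Set.mem_iUnion, SimpleGraph.mem_neighborSet] at hx
        obtain ⟨s, hs, hadj⟩ := hx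
        intro a hax
        subst hax
        match s with
        | Sum.inr u =>
            rw [HH_adj_rl] at hadj
            omega
        | Sum.inl b =>
            have hb3 := hc b hs
            rw [HH_adj_ll] at hadj
            try simp only [fin_mk_val] at *
            unfold sp at hadj
            omega
    · intro p hp q hadj hq
      simp only [hA, Set.mem_setOf_eq, not_forall] at hq
      obtain ⟨b, rfl, hb⟩ := hq
      rw [not_le] at hb
      match p with
      | Sum.inr u =>
          rw [HH_adj_rl] at hadj
          omega
      | Sum.inl a =>
          have ha2 : 2 ≤ a.val := hp a rfl
          rw [HH_adj_ll] at hadj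
          have ha : a.val = 2 := by unfold sp at hadj; omega
          have h0 : (Sum.inl (⟨0, by omega⟩ : Fin (2*t+6))) ∈
              (HH t).neighborSet (Sum.inl a) \ A := by
            refine ⟨?_, ?_⟩
            · rw [SimpleGraph.mem_neighborSet, HH_adj_ll]
              try simp only [fin_mk_val] at *
              unfold sp
              omega
            · simp only [hA, Set.mem_setOf_eq, not_forall]
              exact ⟨_, rfl, by simp⟩
          have h1 : (Sum.inl (⟨1, by omega⟩ : Fin (2*t+6))) ∈
              (HH t).neighborSet (Sum.inl a) \ A := by
            refine ⟨?_, ?_⟩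
            · rw [SimpleGraph.mem_neighborSet, HH_adj_ll]
              try simp only [fin_mk_val] at *
              unfold sp
              omega
            · simp only [hA, Set.mem_setOf_eq, not_forall]
              exact ⟨_, rfl, by simp⟩
          show 1 < _
          rw [Set.one_lt_ncard_iff (Set.toFinite _)]
          exact ⟨_, _, h0, h1, by simp [Fin.ext_iff]⟩
  obtain ⟨l, hl⟩ := h
  have h5 : (Sum.inl (⟨0, by omega⟩ : Fin (2*t+6))) ∈ A := hstall l (by rw [hl]; trivial)
  have := h5 _ rfl
  simp at this

lemma singleton_HH_fail {t : ℕ} {a : Fin (2*t+6)} (ha : a.val ≤ 2) :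
    ¬ IsPDS 1 (HH t) {Sum.inl a} := by
  intro h
  set A : Set (Fin (2*t+6) ⊕ Unit) := {p | ∃ b : Fin (2*t+6), p = Sum.inl b ∧ b.val ≤ 4}
    with hA
  have hstall : ∀ l, powerIter 1 (HH t) {Sum.inl a} l ⊆ A := by
    refine stall (HH t) _ _ ?_ ?_
    · intro x hx
      rcases hx with hx | hx
      · rw [Set.mem_singleton_iff] at hx
        subst hx
        exact ⟨a, rfl, by omega⟩
      · simp only [Set.mem_iUnion, SimpleGraph.mem_neighborSet] at hx
        obtain ⟨s, hs, hadj⟩ := hx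
        rw [Set.mem_singleton_iff] at hs
        subst hs
        match x with
        | Sum.inr u =>
            rw [HH_adj_lr] at hadj
            omega
        | Sum.inl b =>
            rw [HH_adj_ll] at hadj
            refine ⟨b, rfl, ?_⟩
            try simp only [fin_mk_val] at *
            unfold sp at hadj
            omega
    · intro p hp q hadj hq
      obtain ⟨b, rfl, hb4⟩ := hp
      have hb34 : b.val = 3 ∨ b.val = 4 := by
        match q with
        | Sum.inr u =>
            rw [HH_adj_lr] at hadj
            omega
        | Sum.inl c =>
            have hc4 : ¬ (c.val ≤ 4) := fun h =>
              hq ⟨c, rfl, h⟩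
            rw [HH_adj_ll] at hadj
            try simp only [fin_mk_val] at *
            unfold sp at hadj
            omega
      have h5 : (Sum.inl (⟨5, by omega⟩ : Fin (2*t+6))) ∈
          (HH t).neighborSet (Sum.inl b) \ A := by
        refine ⟨?_, ?_⟩
        · rw [SimpleGraph.mem_neighborSet, HH_adj_ll]
          try simp only [fin_mk_val] at *
          unfold sp
          omega
        · rintro ⟨c, hc, hc4⟩
          rw [Sum.inl.injEq] at hc
          subst hc
          simp at hc4
      have hw : (Sum.inr () : Fin (2*t+6) ⊕ Unit) ∈
          (HH t).neighborSet (Sum.inl b) \ A := by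
        refine ⟨?_, ?_⟩
        · rw [SimpleGraph.mem_neighborSet, HH_adj_lr]
          omega
        · rintro ⟨c, hc, _⟩
          exact absurd hc (by simp)
      show 1 < _
      rw [Set.one_lt_ncard_iff (Set.toFinite _)]
      exact ⟨_, _, h5, hw, by simp⟩
  obtain ⟨l, hl⟩ := h
  have h5 : (Sum.inl (⟨5, by omega⟩ : Fin (2*t+6))) ∈ A := hstall l (by rw [hl]; trivial)
  obtain ⟨c, hc, hc4⟩ := h5
  rw [Sum.inl.injEq] at hc
  subst hc
  simp at hc4

lemma ncard_SS (t : ℕ) : (SS t).ncard = 2 := by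
  refine Set.ncard_pair ?_
  simp only [ne_eq, Sum.inl.injEq, Fin.ext_iff, zz_val, xm_val]
  omega

lemma pdNum_HH (t : ℕ) : pdNum 1 (HH t) = 2 := by
  refine le_antisymm (Nat.sInf_le ⟨SS t, ncard_SS t, isPDS_HH t⟩) ?_
  refine le_csInf ⟨2, SS t, ncard_SS t, isPDS_HH t⟩ ?_
  rintro m ⟨S, hcard, hpds⟩
  by_contra hm
  interval_cases m
  · have hS : S = ∅ := (Set.ncard_eq_zero (Set.toFinite S)).mp hcard
    subst hS
    obtain ⟨l, hl⟩ := hpds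
    rw [powerIter_empty] at hl
    exact absurd (hl.symm ▸ Set.mem_univ (Sum.inl (⟨0, by omega⟩ : Fin (2*t+6))))
      (Set.notMem_empty _)
  · obtain ⟨p, rfl⟩ := Set.ncard_eq_one.mp hcard
    obtain ⟨a, ha, ha2⟩ := pin_HH hpds
    rw [Set.mem_singleton_iff] at ha
    subst ha
    exact singleton_HH_fail ha2 hpds

lemma ppt_HH (t : ℕ) : ppt 1 (HH t) ≤ t+2 := by
  have hmin : IsMinPDS 1 (HH t) (SS t) :=
    ⟨isPDS_HH t, by rw [pdNum_HH]; exact ncard_SS t⟩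
  have h1 : ppt 1 (HH t) ≤ pptOf 1 (HH t) (SS t) :=
    Nat.sInf_le ⟨SS t, hmin, rfl⟩
  have h2 : pptOf 1 (HH t) (SS t) ≤ t+2 := Nat.sInf_le (HH_univ t)
  omega

end PowerProp

open PowerProp in
/-- Subdividing an edge can decrease the power propagation time by any amount. -/
theorem exists_subdivide_ppt_decrease (t : ℕ) :
    ∃ (n : ℕ) (G : SimpleGraph (Fin n)) (u v : Fin n), G.Adj u v ∧
      (ppt 1 (subdivide G u v) : ℤ) ≤ (ppt 1 G : ℤ) - t := by
  refine ⟨2*t+6, GG t, uu t, vv t, ?_, ?_⟩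
  · rw [GG_adj]
    refine ⟨by simp, Or.inl ?_⟩
    simp only [uu_val, vv_val]
    try simp only [fin_mk_val] at *
    unfold sp
    omega
  · have h1 := ppt_GG t
    have h2 := ppt_HH t
    have heq : subdivide (GG t) (uu t) (vv t) = HH t := rfl
    rw [heq]
    omega
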